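/- For every α ∈ (0, 1/2] there exists a constant C > 0 such that for every α-weight-balanced binary search tree S with n ≥ 1 nodes, writing Preorder(S) = (x_1,...,x_n), it holds that Σ_{i=2}^{n} log₂(|r(x_i) − r(x_{i−1})| + 1) ≤ C·n, where r(x) is the rank of x among the keys of S (the number of keys of S that are ≤ x). -/

import Mathlib

/-- Binary trees with keys at internal nodes. -/
inductive BT (α : Type) where
  | leaf : BT α
  | node : BT α → α → BT α → BT α
deriving DecidableEq

namespace BT

variable {α : Type} [LinearOrder α]

/-- The list of keys of a tree, in symmetric (inorder) order. -/
def keys : BT α → List α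
  | leaf => []
  | node l v r => keys l ++ v :: keys r

/-- The number of nodes of a tree. -/
def size : BT α → ℕ
  | leaf => 0
  | node l _ r => size l + size r + 1

/-- The symmetric-order (binary search tree) property. -/
def IsBST : BT α → Prop
  | leaf => True
  | node l v r => (∀ x ∈ l.keys, x < v) ∧ (∀ x ∈ r.keys, v < x) ∧ l.IsBST ∧ r.IsBST

/-- Preorder of a binary tree: root, then left subtree, then right subtree. -/
def preorder : BT α → List α
  | leaf => []
  | node l v r => v :: (preorder l ++ preorder r)

/-- Postorder of a binary tree: left subtree, right subtree, then root. -/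
def postorder : BT α → List α
  | leaf => []
  | node l v r => postorder l ++ postorder r ++ [v]

/-- Reversed preorder: root, then right subtree, then left subtree
(the preorder of the mirror image). -/
def revPreorder : BT α → List α
  | leaf => []
  | node l v r => v :: (revPreorder r ++ revPreorder l)

/-- Standard leaf insertion into a binary search tree. -/
def insertKey : BT α → α → BT α
  | leaf, x => node leaf x leaf
  | node l v r, x =>
    if x < v then node (insertKey l x) v r
    else if v < x then node l v (insertKey r x)
    else node l v r

/-- The depth (number of edges from the root) of the node with key `x`,
located by binary search. -/
def depthOf : BT α → α → ℕ
  | leaf, _ => 0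
  | node l v r, x =>
    if x < v then depthOf l x + 1
    else if v < x then depthOf r x + 1
    else 0

/-- The search path to the key `x`: `false` records a step to a left child,
`true` a step to a right child. -/
def pathTo : BT α → α → List Bool
  | leaf, _ => []
  | node l v r, x =>
    if x < v then false :: pathTo l x
    else if v < x then true :: pathTo r x
    else []

/-- The left-depth of the node with key `x`: the number of left-child edges
on the path from the root to it. -/
def leftDepthKey : BT α → α → ℕ
  | leaf, _ => 0
  | node l v r, x =>
    if x < v then leftDepthKey l x + 1
    else if v < x then leftDepthKey r x
    else 0

/-- The subtree rooted at the node with key `x` (empty if `x` is absent). -/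
def subtreeAt : BT α → α → BT α
  | leaf, _ => leaf
  | node l v r, x =>
    if x < v then subtreeAt l x
    else if v < x then subtreeAt r x
    else node l v r

/-- The key at the root, if any. -/
def rootKey : BT α → Option α
  | leaf => none
  | node _ v _ => some v

/-- The key of the parent of the node with key `x`, if any. -/
def parentKey : BT α → α → Option α
  | leaf, _ => none
  | node l v r, x =>
    if x < v then (if l.rootKey = some x then some v else l.parentKey x)
    else if v < x then (if r.rootKey = some x then some v else r.parentKey x)
    else none

/-- A step of the context (zipper) describing the search path from the root
to the current subtree: `inL v r` means the current subtree is the left child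
of a node with key `v` and right subtree `r`; `inR l v` means it is the right
child of a node with key `v` and left subtree `l`. -/
inductive Ctx (α : Type) where
  | inL : α → BT α → Ctx α
  | inR : BT α → α → Ctx α

/-- Descend along the search path for `x`, recording the context.
The head of the returned list corresponds to the immediate parent. -/
def descend : BT α → α → List (Ctx α) → List (Ctx α) × BT α
  | leaf, _, acc => (acc, leaf)
  | node l v r, x, acc =>
    if x < v then descend l x (Ctx.inL v r :: acc)
    else if v < x then descend r x (Ctx.inR l v :: acc)
    else (acc, node l v r)

/-- Reattach a subtree into its context, with no rotations. -/
def rebuild : BT α → List (Ctx α) → BT α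
  | t, [] => t
  | t, Ctx.inL v r :: cs => rebuild (node t v r) cs
  | t, Ctx.inR l v :: cs => rebuild (node l v t) cs

/-- Bottom-up splay steps: repeatedly apply zig / zig-zig / zig-zag steps to
the current subtree (rooted at the node being splayed) until the context is
exhausted. -/
def splayLoop : BT α → List (Ctx α) → BT α
  | t, [] => t
  | node a x b, [Ctx.inL v r] => node a x (node b v r)          -- zig
  | node a x b, [Ctx.inR l v] => node (node l v a) x b          -- zig
  | node a x b, Ctx.inL p pr :: Ctx.inL g gr :: cs =>           -- zig-zig
      splayLoop (node a x (node b p (node pr g gr))) cs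
  | node a x b, Ctx.inL p pr :: Ctx.inR gl g :: cs =>           -- zig-zag
      splayLoop (node (node gl g a) x (node b p pr)) cs
  | node a x b, Ctx.inR pl p :: Ctx.inR gl g :: cs =>           -- zig-zig
      splayLoop (node (node (node gl g pl) p a) x b) cs
  | node a x b, Ctx.inR pl p :: Ctx.inL g gr :: cs =>           -- zig-zag
      splayLoop (node (node pl p a) x (node b g gr)) cs
  | leaf, cs => rebuild leaf cs   -- unreachable when the splayed key is present

/-- Splaying the key `x`: if `x` occurs in the tree, bring its node to the
root by bottom-up splay steps; otherwise leave the tree unchanged. -/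
def splay (x : α) (t : BT α) : BT α :=
  match descend t x [] with
  | (_, leaf) => t
  | (cs, found) => splayLoop found cs

/-- `α`-weight-balance in the sense of Nievergelt–Reingold:
at each node, `min(|L|,|R|) + 1 ≥ α * (|x| + 1)`. -/
def WeightBalanced (a : ℝ) : BT α → Prop
  | leaf => True
  | node l _ r =>
      (min l.size r.size + 1 : ℝ) ≥ a * ((l.size + r.size + 1 : ℕ) + 1 : ℝ) ∧
      WeightBalanced a l ∧ WeightBalanced a r

/-- The rank of `x` in `t`: the number of keys of `t` that are `≤ x`. -/
def rank (t : BT α) (x : α) : ℕ := (t.keys.filter (fun y => y ≤ x)).length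

end BT

section Defs

variable {α : Type} [LinearOrder α]

/-- The insertion tree of a sequence: leaf-insert the keys in order. -/
def bstOf (π : List α) : BT α := π.foldl BT.insertKey BT.leaf

/-- `q` is a sub-root: a node of `t` not yet touched whose parent is touched,
where `touched` is the list of touched keys. -/
def IsSubRoot (t : BT α) (touched : List α) (q : α) : Prop :=
  q ∈ t.keys ∧ q ∉ touched ∧ ∃ p, t.parentKey q = some p ∧ p ∈ touched

/-- π avoids the pattern (2,3,1). -/
def Avoids231 (π : List α) : Prop :=
  ¬ ∃ i j k : Fin π.length, i < j ∧ j < k ∧ π.get k < π.get i ∧ π.get i < π.get j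

/-- π avoids the pattern (3,1,2). -/
def Avoids312 (π : List α) : Prop :=
  ¬ ∃ i j k : Fin π.length, i < j ∧ j < k ∧ π.get j < π.get k ∧ π.get k < π.get i

/-- π avoids the pattern (2,1,3). -/
def Avoids213 (π : List α) : Prop :=
  ¬ ∃ i j k : Fin π.length, i < j ∧ j < k ∧ π.get j < π.get i ∧ π.get i < π.get k

/-- π contains a strictly decreasing subsequence of length `k`. -/
def HasDecreasingSubseq (π : List α) (k : ℕ) : Prop :=
  ∃ s : List α, s.Sublist π ∧ s.length = k ∧ s.Chain' (· > ·)

/-- Splay the keys of a list in order, starting from `t`. -/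
def splaySeq (π : List α) (t : BT α) : BT α := π.foldl (fun s x => BT.splay x s) t

/-- The cost of splaying a sequence of keys starting from `t`:
each splay costs the current depth of the requested key plus one. -/
def splayCost : BT α → List α → ℕ
  | _, [] => 0
  | t, x :: xs => (t.depthOf x + 1) + splayCost (BT.splay x t) xs

/-- The cost of insertion splaying a sequence of keys starting from `t`:
each key is leaf-inserted, then the new node is splayed, at a cost of
its depth after insertion plus one. -/
def insertSplayCost : BT α → List α → ℕ
  | _, [] => 0
  | t, x :: xs =>
    ((t.insertKey x).depthOf x + 1) + insertSplayCost (BT.splay x (t.insertKey x)) xs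

/-- `DF rk xs` = Σ_{i≥2} log₂(|rk(x_i) − rk(x_{i−1})| + 1). -/
noncomputable def DF (rk : α → ℕ) (xs : List α) : ℝ :=
  ((xs.zip xs.tail).map
    (fun p => Real.logb 2 (|(rk p.2 : ℝ) - (rk p.1 : ℝ)| + 1))).sum

/-- The rank of `x` within the sequence `σ` itself. -/
def rankIn (σ : List α) (x : α) : ℕ := (σ.filter (fun y => y ≤ x)).length

/-- The dynamic-finger sum of a sequence, with ranks computed in the
sequence itself. -/
noncomputable def DFseq (σ : List α) : ℝ := DF (rankIn σ) σ

end Defs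
section Aux
set_option linter.unusedSectionVars false

open Real

variable {α : Type} [LinearOrder α]

lemma DF_nil (rk : α → ℕ) : DF rk [] = 0 := by simp [DF]

lemma DF_single (rk : α → ℕ) (x : α) : DF rk [x] = 0 := by simp [DF]

lemma DF_cons_cons (rk : α → ℕ) (x y : α) (t : List α) :
    DF rk (x :: y :: t)
      = Real.logb 2 (|(rk y : ℝ) - (rk x : ℝ)| + 1) + DF rk (y :: t) := by
  simp [DF, List.zip]

lemma term_nonneg (rk : α → ℕ) (x y : α) :
    0 ≤ Real.logb 2 (|(rk y : ℝ) - (rk x : ℝ)| + 1) := by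
  apply Real.logb_nonneg one_lt_two
  have := abs_nonneg ((rk y : ℝ) - (rk x : ℝ))
  linarith

lemma DF_cons_le (rk : α → ℕ) (x : α) (t : List α) (M : ℝ)
    (hM : ∀ p q : α, Real.logb 2 (|(rk q : ℝ) - (rk p : ℝ)| + 1) ≤ M) :
    DF rk (x :: t) ≤ M + DF rk t := by
  cases t with
  | nil =>
      have h0 := term_nonneg rk x x
      have := hM x x
      simp [DF_single, DF_nil]
      linarith
  | cons y u =>
      rw [DF_cons_cons]
      have := hM x y
      linarith

lemma DF_append_le (rk : α → ℕ) (s t : List α) (M : ℝ) (hM0 : 0 ≤ M)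
    (hM : ∀ p q : α, Real.logb 2 (|(rk q : ℝ) - (rk p : ℝ)| + 1) ≤ M) :
    DF rk (s ++ t) ≤ DF rk s + DF rk t + M := by
  induction s with
  | nil =>
      simp only [List.nil_append, DF_nil]
      linarith
  | cons x s ih =>
      cases s with
      | nil =>
          have h1 := DF_cons_le rk x t M hM
          have h2 : DF rk ([x] ++ t) = DF rk (x :: t) := by simp
          rw [h2, DF_single]
          linarith
      | cons y u =>
          have h1 : DF rk ((x :: y :: u) ++ t)
              = Real.logb 2 (|(rk y : ℝ) - (rk x : ℝ)| + 1) + DF rk ((y :: u) ++ t) := by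
            rw [List.cons_append, List.cons_append, DF_cons_cons]
          rw [h1, DF_cons_cons]
          linarith

lemma DF_shift (rk rk' : α → ℕ) (c : ℝ) :
    ∀ (xs : List α), (∀ x ∈ xs, (rk x : ℝ) = (rk' x : ℝ) + c) → DF rk xs = DF rk' xs := by
  intro xs
  induction xs with
  | nil => intro; rfl
  | cons x t ih =>
      intro h
      cases t with
      | nil => rw [DF_single, DF_single]
      | cons y u =>
          rw [DF_cons_cons, DF_cons_cons]
          have hx : (rk x : ℝ) = (rk' x : ℝ) + c := h x (by simp)
          have hy : (rk y : ℝ) = (rk' y : ℝ) + c := h y (by simp)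
          have ht : DF rk (y :: u) = DF rk' (y :: u) := ih (fun z hz => h z (by simp [hz]))
          rw [ht, hx, hy]
          ring_nf

end Aux
section Aux2
set_option linter.unusedSectionVars false

open Real BT

variable {α : Type} [LinearOrder α]

lemma keys_length (t : BT α) : (BT.keys t).length = t.size := by
  induction t with
  | leaf => simp [BT.keys, BT.size]
  | node l v r ihl ihr => simp [BT.keys, BT.size, ihl, ihr]; omega

lemma rank_le_size (t : BT α) (x : α) : BT.rank t x ≤ t.size := by
  rw [BT.rank, ← keys_length]
  exact List.length_filter_le _ _

lemma mem_keys_of_mem_preorder {t : BT α} {x : α} (h : x ∈ t.preorder) : x ∈ t.keys := by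
  induction t with
  | leaf => simp [BT.preorder] at h
  | node l v r ihl ihr =>
      simp only [BT.preorder, List.mem_cons, List.mem_append] at h
      simp only [BT.keys, List.mem_append, List.mem_cons]
      rcases h with h | h | h
      · exact Or.inr (Or.inl h)
      · exact Or.inl (ihl h)
      · exact Or.inr (Or.inr (ihr h))

lemma rank_node (l r : BT α) (v x : α) :
    BT.rank (BT.node l v r) x
      = BT.rank l x + (if v ≤ x then 1 else 0) + BT.rank r x := by
  by_cases h : v ≤ x <;>
    simp [BT.rank, BT.keys, List.filter_append, List.filter_cons, h] <;> omega

lemma rank_left {l r : BT α} {v x : α} (hbst : (BT.node l v r).IsBST)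
    (hx : x ∈ l.keys) : BT.rank (BT.node l v r) x = BT.rank l x := by
  obtain ⟨hl, hr, _, _⟩ := hbst
  have hxv : x < v := hl x hx
  have h1 : ¬ v ≤ x := not_le.mpr hxv
  have h2 : BT.rank r x = 0 := by
    rw [BT.rank, List.length_eq_zero_iff]
    rw [List.filter_eq_nil_iff]
    intro y hy
    have : v < y := hr y hy
    simp only [decide_eq_true_eq]
    exact not_le.mpr (lt_trans hxv this)
  rw [rank_node, h2, if_neg h1]
  omega

lemma rank_right {l r : BT α} {v x : α} (hbst : (BT.node l v r).IsBST)
    (hx : x ∈ r.keys) : BT.rank (BT.node l v r) x = l.size + 1 + BT.rank r x := by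
  obtain ⟨hl, hr, _, _⟩ := hbst
  have hvx : v < x := hr x hx
  have h2 : BT.rank l x = l.size := by
    rw [BT.rank, ← keys_length]
    congr 1
    rw [List.filter_eq_self]
    intro y hy
    have : y < v := hl y hy
    simp only [decide_eq_true_eq]
    exact le_of_lt (lt_trans this hvx)
  rw [rank_node, h2, if_pos (le_of_lt hvx)]

lemma term_le_of_size (t : BT α) (p q : α) :
    Real.logb 2 (|(BT.rank t q : ℝ) - (BT.rank t p : ℝ)| + 1)
      ≤ Real.logb 2 ((t.size : ℝ) + 1) := by
  apply Real.logb_le_logb_of_le one_lt_two (by positivity)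
  have h1 : (BT.rank t q : ℝ) ≤ (t.size : ℝ) := by exact_mod_cast rank_le_size t q
  have h2 : (BT.rank t p : ℝ) ≤ (t.size : ℝ) := by exact_mod_cast rank_le_size t p
  have h3 : (0:ℝ) ≤ (BT.rank t q : ℝ) := Nat.cast_nonneg _
  have h4 : (0:ℝ) ≤ (BT.rank t p : ℝ) := Nat.cast_nonneg _
  have : |(BT.rank t q : ℝ) - (BT.rank t p : ℝ)| ≤ (t.size : ℝ) := by
    rw [abs_le]; constructor <;> linarith
  linarith

lemma df_main {a : ℝ} (ha0 : 0 < a) (ha : a ≤ 1 / 2) (T : BT α)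
    (hbst : T.IsBST) (hwb : BT.WeightBalanced a T) :
    DF T.rank T.preorder
      ≤ (4 * Real.logb 2 a⁻¹) * T.size - 2 * Real.logb 2 ((T.size : ℝ) + 1) := by
  induction T with
  | leaf => simp [BT.preorder, DF_nil, BT.size]
  | node l v r ihl ihr =>
      obtain ⟨hbl, hbr, hl, hr⟩ := hbst
      obtain ⟨hbal, wl, wr⟩ := hwb
      set T := BT.node l v r with hT
      set n : ℕ := T.size with hn
      set M : ℝ := Real.logb 2 ((n : ℝ) + 1) with hM
      have hM0 : 0 ≤ M := by
        have h0 : (0:ℝ) ≤ (n : ℝ) := Nat.cast_nonneg n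
        exact Real.logb_nonneg one_lt_two (by linarith)
      have hMb : ∀ p q : α, Real.logb 2 (|(T.rank q : ℝ) - (T.rank p : ℝ)| + 1) ≤ M :=
        fun p q => term_le_of_size T p q
      -- step 1: split DF over the preorder
      have hsplit : DF T.rank T.preorder ≤ DF T.rank l.preorder + DF T.rank r.preorder + 2 * M := by
        have h1 : T.preorder = v :: (l.preorder ++ r.preorder) := rfl
        have h2 := DF_cons_le T.rank v (l.preorder ++ r.preorder) M hMb
        have h3 := DF_append_le T.rank l.preorder r.preorder M hM0 hMb
        rw [h1]; linarith
      -- step 2: intrinsic ranks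
      have hL : DF T.rank l.preorder = DF l.rank l.preorder := by
        apply DF_shift T.rank l.rank 0
        intro x hx
        rw [rank_left ⟨hbl, hbr, hl, hr⟩ (mem_keys_of_mem_preorder hx)]
        ring
      have hR : DF T.rank r.preorder = DF r.rank r.preorder := by
        apply DF_shift T.rank r.rank ((l.size : ℝ) + 1)
        intro x hx
        rw [rank_right ⟨hbl, hbr, hl, hr⟩ (mem_keys_of_mem_preorder hx)]
        push_cast
        ring
      have IHL := ihl hl wl
      have IHR := ihr hr wr
      -- balance consequences
      have hsize : (n : ℝ) = (l.size : ℝ) + (r.size : ℝ) + 1 := by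
        have : n = l.size + r.size + 1 := rfl
        rw [this]; push_cast; ring
      push_cast at hbal
      have hminl : min (l.size : ℝ) (r.size : ℝ) ≤ (l.size : ℝ) := min_le_left _ _
      have hminr : min (l.size : ℝ) (r.size : ℝ) ≤ (r.size : ℝ) := min_le_right _ _
      have hnl : a * ((n : ℝ) + 1) ≤ (l.size : ℝ) + 1 := by
        rw [hsize]; linarith
      have hnr : a * ((n : ℝ) + 1) ≤ (r.size : ℝ) + 1 := by
        rw [hsize]; linarith
      have hlogl : Real.logb 2 a + M ≤ Real.logb 2 ((l.size : ℝ) + 1) := by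
        have hpos : (0:ℝ) < a * ((n : ℝ) + 1) := by positivity
        calc Real.logb 2 a + M = Real.logb 2 (a * ((n : ℝ) + 1)) := by
              rw [Real.logb_mul (ne_of_gt ha0) (by positivity)]
          _ ≤ _ := Real.logb_le_logb_of_le one_lt_two hpos hnl
      have hlogr : Real.logb 2 a + M ≤ Real.logb 2 ((r.size : ℝ) + 1) := by
        have hpos : (0:ℝ) < a * ((n : ℝ) + 1) := by positivity
        calc Real.logb 2 a + M = Real.logb 2 (a * ((n : ℝ) + 1)) := by
              rw [Real.logb_mul (ne_of_gt ha0) (by positivity)]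
          _ ≤ _ := Real.logb_le_logb_of_le one_lt_two hpos hnr
      have hinv : Real.logb 2 a⁻¹ = - Real.logb 2 a := Real.logb_inv 2 a
      rw [hL] at hsplit
      rw [hR] at hsplit
      have goal_eq : ((T.size : ℝ)) = (n : ℝ) := by rw [hn]
      rw [goal_eq]
      have hCn : 4 * Real.logb 2 a⁻¹ * (n : ℝ)
          = 4 * Real.logb 2 a⁻¹ * (l.size : ℝ) + 4 * Real.logb 2 a⁻¹ * (r.size : ℝ)
            + 4 * Real.logb 2 a⁻¹ := by rw [hsize]; ring
      linarith

end Aux2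
/-- For every α ∈ (0,1/2] there is a constant `C > 0` such that for every
α-weight-balanced binary search tree `S` with at least one node, the
dynamic-finger sum of `Preorder(S)` (with ranks in `S`) is at most `C·|S|`. -/
theorem df_preorder_balanced {a : ℝ} (ha0 : 0 < a) (ha : a ≤ 1 / 2) :
    ∃ C : ℝ, 0 < C ∧
      ∀ (β : Type) (_ : LinearOrder β) (S : BT β), S.IsBST →
        BT.WeightBalanced a S → 1 ≤ S.size →
        DF (S.rank) S.preorder ≤ C * S.size := by
  have hainv : (2:ℝ) ≤ a⁻¹ := by
    have h1 : a * a⁻¹ = 1 := mul_inv_cancel₀ (ne_of_gt ha0)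
    have h2 : 0 < a⁻¹ := inv_pos.mpr ha0
    nlinarith
  have hCpos : 0 < 4 * Real.logb 2 a⁻¹ := by
    have : (0:ℝ) < Real.logb 2 a⁻¹ := Real.logb_pos one_lt_two (by linarith)
    linarith
  refine ⟨4 * Real.logb 2 a⁻¹, hCpos, ?_⟩
  intro β instβ S hbst hwb _
  letI := instβ
  have h := df_main ha0 ha S hbst hwb
  have h0 : (0:ℝ) ≤ (S.size : ℝ) := Nat.cast_nonneg _
  have hlog : 0 ≤ Real.logb 2 ((S.size : ℝ) + 1) :=
    Real.logb_nonneg one_lt_two (by linarith)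
  linarith
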